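/- Let σ₁ > 0, σ₂ > 0 and r > 0, and set c = 1/(2σ₂²) − 1/(2σ₁²) and z = (r/4)·(1/σ₂² − 1/σ₁²). Define w : (0, r) → ℝ by w(x) = x^{−1/2}·(r − x)^{−1/2}·exp(−(r − x)/(2σ₂²) − x/(2σ₁²)). Then ∫_0^r x·w(x) dx = (r/2)·(1 + I₁(z)/I₀(z))·∫_0^r w(x) dx. In particular, the conditional expectation of X² given X² + Y² = r, for X ~ N(0, σ₁²) and Y ~ N(0, σ₂²) independent, equals (r/2)·(1 + I₁(z)/I₀(z)). -/

import Mathlib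

open MeasureTheory Real Set

/-- Modified Bessel function of the first kind of order 0, via its integral representation. -/
noncomputable def besselI0 (z : ℝ) : ℝ := (1 / π) * ∫ θ in (0:ℝ)..π, Real.exp (z * Real.cos θ)

/-- Modified Bessel function of the first kind of order 1, via its integral representation. -/
noncomputable def besselI1 (z : ℝ) : ℝ :=
  (1 / π) * ∫ θ in (0:ℝ)..π, Real.exp (z * Real.cos θ) * Real.cos θ

theorem hoyt_conditional_second_moment
    (σ₁ σ₂ r : ℝ) (hσ₁ : 0 < σ₁) (hσ₂ : 0 < σ₂) (hr : 0 < r)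
    (c z : ℝ)
    (hc : c = 1 / (2 * σ₂ ^ 2) - 1 / (2 * σ₁ ^ 2))
    (hz : z = (r / 4) * (1 / σ₂ ^ 2 - 1 / σ₁ ^ 2))
    (w : ℝ → ℝ)
    (hw : ∀ x : ℝ, w x =
      Real.exp (-(r - x) / (2 * σ₂ ^ 2) - x / (2 * σ₁ ^ 2)) /
        (Real.sqrt x * Real.sqrt (r - x))) :
    ∫ x in Set.Ioo 0 r, x * w x =
      (r / 2) * (1 + besselI1 z / besselI0 z) * ∫ x in Set.Ioo 0 r, w x := by
  have hσ₁' : (σ₁ : ℝ) ^ 2 ≠ 0 := by positivity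
  have hσ₂' : (σ₂ : ℝ) ^ 2 ≠ 0 := by positivity
  set f : ℝ → ℝ := fun θ => r / 2 * (1 + Real.cos θ) with hf
  -- derivative
  have hderiv : ∀ θ ∈ Ioo (0:ℝ) π, HasDerivWithinAt f (r / 2 * (-Real.sin θ)) (Ioo 0 π) θ := by
    intro θ _
    exact (((Real.hasDerivAt_cos θ).const_add 1).const_mul (r/2)).hasDerivWithinAt
  -- injectivity
  have hinj : InjOn f (Ioo 0 π) := by
    intro a ha b hb hab
    have hca : Real.cos a = Real.cos b := by
      simp only [hf] at hab
      nlinarith [hab]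
    exact Real.injOn_cos ⟨ha.1.le, ha.2.le⟩ ⟨hb.1.le, hb.2.le⟩ hca
  -- image
  have himg : f '' Ioo 0 π = Ioo 0 r := by
    ext x
    constructor
    · rintro ⟨θ, hθ, rfl⟩
      have h1 : Real.cos θ < 1 := by
        have := Real.strictAntiOn_cos (left_mem_Icc.2 Real.pi_pos.le) ⟨hθ.1.le, hθ.2.le⟩ hθ.1
        simpa using this
      have h2 : -1 < Real.cos θ := by
        have := Real.strictAntiOn_cos ⟨hθ.1.le, hθ.2.le⟩ (right_mem_Icc.2 Real.pi_pos.le) hθ.2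
        simpa using this
      constructor
      · simp only [hf]; nlinarith
      · simp only [hf]; nlinarith
    · intro hx
      have hv1 : (-1 : ℝ) < 2 * x / r - 1 := by
        have hx0 : 0 < x := hx.1
        have : 0 < 2 * x / r := by positivity
        linarith
      have hv2 : 2 * x / r - 1 < 1 := by
        have : 2 * x / r < 2 := by rw [div_lt_iff₀ hr]; nlinarith [hx.2]
        linarith
      refine ⟨Real.arccos (2 * x / r - 1), ⟨?_, ?_⟩, ?_⟩
      · exact Real.arccos_pos.2 hv2
      · have h := Real.neg_pi_div_two_lt_arcsin.2 hv1
        simp only [Real.arccos]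
        linarith
      · simp only [hf]
        rw [Real.cos_arccos hv1.le hv2.le]
        field_simp
        ring
  -- change of variables
  have hcov : ∀ g : ℝ → ℝ, ∫ x in Ioo 0 r, g x
      = ∫ θ in Ioo 0 π, |r / 2 * (-Real.sin θ)| • g (f θ) := by
    intro g
    rw [← himg]
    exact integral_image_eq_integral_abs_deriv_smul measurableSet_Ioo hderiv hinj g
  set K : ℝ := -(r / (4 * σ₂ ^ 2)) - r / (4 * σ₁ ^ 2) with hK
  -- pointwise simplification on (0, π)
  have hsin : ∀ θ ∈ Ioo (0:ℝ) π, 0 < Real.sin θ := fun θ hθ =>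
    Real.sin_pos_of_pos_of_lt_pi hθ.1 hθ.2
  have hcos1 : ∀ θ : ℝ, -1 ≤ Real.cos θ := Real.neg_one_le_cos
  have habs : ∀ θ ∈ Ioo (0:ℝ) π, |r / 2 * (-Real.sin θ)| = r / 2 * Real.sin θ := by
    intro θ hθ
    rw [abs_of_nonpos (by nlinarith [hsin θ hθ])]
    ring
  have hsqrt : ∀ θ ∈ Ioo (0:ℝ) π,
      Real.sqrt (f θ) * Real.sqrt (r - f θ) = r / 2 * Real.sin θ := by
    intro θ hθ
    have hfnn : 0 ≤ f θ := by simp only [hf]; nlinarith [hcos1 θ]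
    have hmul : f θ * (r - f θ) = (r / 2 * Real.sin θ) ^ 2 := by
      have hsc := Real.sin_sq_add_cos_sq θ
      simp only [hf]; linear_combination (-(r/2)^2) * hsc
    rw [← Real.sqrt_mul hfnn, hmul, Real.sqrt_sq (by nlinarith [hsin θ hθ])]
  have hexp : ∀ θ : ℝ, -(r - f θ) / (2 * σ₂ ^ 2) - f θ / (2 * σ₁ ^ 2)
      = K + z * Real.cos θ := by
    intro θ
    simp only [hf, hK, hz]
    field_simp
    ring
  have hwf : ∀ θ ∈ Ioo (0:ℝ) π,
      |r / 2 * (-Real.sin θ)| • w (f θ) = Real.exp K * Real.exp (z * Real.cos θ) := by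
    intro θ hθ
    have hne : r / 2 * Real.sin θ ≠ 0 := by nlinarith [hsin θ hθ]
    rw [smul_eq_mul, habs θ hθ, hw, hsqrt θ hθ, hexp θ, mul_div_cancel₀ _ hne, Real.exp_add]
  have hxwf : ∀ θ ∈ Ioo (0:ℝ) π,
      |r / 2 * (-Real.sin θ)| • (f θ * w (f θ))
        = Real.exp K * (r / 2) * (Real.exp (z * Real.cos θ)
            + Real.exp (z * Real.cos θ) * Real.cos θ) := by
    intro θ hθ
    have hne : r / 2 * Real.sin θ ≠ 0 := by nlinarith [hsin θ hθ]
    have hsne : Real.sin θ ≠ 0 := (hsin θ hθ).ne'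
    rw [smul_eq_mul, habs θ hθ, hw, hsqrt θ hθ, hexp θ, Real.exp_add]
    simp only [hf]
    field_simp
  have hcont : Continuous fun θ : ℝ => Real.exp (z * Real.cos θ) := by fun_prop
  -- rewrite the two integrals
  have hI1 : ∫ x in Ioo 0 r, w x = Real.exp K * (π * besselI0 z) := by
    rw [hcov w, setIntegral_congr_fun measurableSet_Ioo hwf,
      ← integral_Ioc_eq_integral_Ioo, ← intervalIntegral.integral_of_le Real.pi_pos.le,
      intervalIntegral.integral_const_mul]
    unfold besselI0
    field_simp
  have hI2 : ∫ x in Ioo 0 r, x * w x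
      = Real.exp K * (r / 2) * (π * besselI0 z + π * besselI1 z) := by
    rw [hcov (fun x => x * w x), setIntegral_congr_fun measurableSet_Ioo hxwf,
      ← integral_Ioc_eq_integral_Ioo, ← intervalIntegral.integral_of_le Real.pi_pos.le,
      intervalIntegral.integral_const_mul,
      intervalIntegral.integral_add (f := fun θ => Real.exp (z * Real.cos θ))
        (g := fun θ => Real.exp (z * Real.cos θ) * Real.cos θ)
        (hcont.intervalIntegrable _ _)
        ((hcont.mul Real.continuous_cos).intervalIntegrable _ _)]
    unfold besselI0 besselI1
    field_simp
  -- positivity of I₀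
  have hI0pos : 0 < besselI0 z := by
    have h : 0 < ∫ θ in (0:ℝ)..π, Real.exp (z * Real.cos θ) :=
      intervalIntegral.intervalIntegral_pos_of_pos_on
        (hcont.intervalIntegrable _ _)
        (fun θ _ => Real.exp_pos _) Real.pi_pos
    unfold besselI0
    have : (0:ℝ) < 1 / π := by positivity
    exact mul_pos this h
  rw [hI1, hI2]
  field_simp
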